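/- If cf(𝔡) < 𝔡 (i.e., 𝔡 is singular), then there exists a cf(𝔡)-unbounded subset of [ℕ]^∞: a set X of cardinality cf(𝔡) such that every ≤-bounded subset of X has cardinality less than cf(𝔡). -/

import Mathlib

open Set Cardinal Filter

/-- The increasing enumeration of a set of naturals (meaningful when the set is infinite). -/
noncomputable def enum (a : Set ℕ) : ℕ → ℕ := Nat.nth (· ∈ a)

/-- `a ⊎ b = {2k : k ∈ a} ∪ {2k+1 : k ∈ b}`. -/
def usum (a b : Set ℕ) : Set ℕ := (fun k => 2 * k) '' a ∪ (fun k => 2 * k + 1) '' b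

/-- A dominating family of functions. -/
def IsDominating (D : Set (ℕ → ℕ)) : Prop :=
  ∀ a : ℕ → ℕ, ∃ d ∈ D, ∀ᶠ n in Filter.atTop, a n ≤ d n

/-- The dominating number 𝔡. -/
noncomputable def dNum : Cardinal := sInf { c | ∃ D, IsDominating D ∧ c = #D }

instance instWOtoType (o : Ordinal) : IsWellOrder o.ToType (· < ·) := isWellOrder_lt

namespace Stmt7Aux

lemma isDominating_univ : IsDominating (Set.univ : Set (ℕ → ℕ)) :=
  fun a => ⟨a, Set.mem_univ a, Filter.Eventually.of_forall fun _ => le_rfl⟩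

lemma dSet_nonempty : { c | ∃ D, IsDominating D ∧ c = #D }.Nonempty :=
  ⟨#(Set.univ : Set (ℕ → ℕ)), Set.univ, isDominating_univ, rfl⟩

lemma dNum_mem : ∃ D, IsDominating D ∧ dNum = #D := csInf_mem dSet_nonempty

lemma dNum_le {D : Set (ℕ → ℕ)} (hD : IsDominating D) : dNum ≤ #D :=
  csInf_le' ⟨D, hD, rfl⟩

lemma exists_escape {D : Set (ℕ → ℕ)} (hD : #D < dNum) :
    ∃ g : ℕ → ℕ, ∀ f ∈ D, ∃ᶠ n in atTop, f n < g n := by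
  by_contra hc
  push_neg at hc
  have hdom : IsDominating D := by
    intro a
    obtain ⟨f, hf, hff⟩ := hc a
    refine ⟨f, hf, ?_⟩
    simpa only [Filter.not_frequently, not_lt] using hff
  exact absurd (dNum_le hdom) (not_le.2 hD)

lemma aleph0_lt_dNum : ℵ₀ < dNum := by
  obtain ⟨D, hD, hDeq⟩ := dNum_mem
  rw [hDeq, ← not_le]
  intro hle
  have hcnt : D.Countable := Cardinal.mk_le_aleph0_iff.1 hle
  obtain ⟨d0, hd0, -⟩ := hD 0
  obtain ⟨f, hfD⟩ := hcnt.exists_eq_range ⟨d0, hd0⟩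
  obtain ⟨d, hdD, hev⟩ := hD (fun n => (Finset.range (n + 1)).sup (fun j => f j n) + 1)
  obtain ⟨i, rfl⟩ : ∃ i, f i = d := by
    rw [hfD] at hdD; exact hdD.imp fun i hi => hi
  obtain ⟨N, hN⟩ := Filter.eventually_atTop.1 hev
  have h1 := hN (max N i) (le_max_left _ _)
  have h3 : f i (max N i) ≤ (Finset.range (max N i + 1)).sup (fun j => f j (max N i)) :=
    Finset.le_sup (f := fun j => f j (max N i)) (Finset.mem_range.2 (by omega))
  omega

lemma mem_usum_even {a t : Set ℕ} {k : ℕ} : 2 * k ∈ usum a t ↔ k ∈ a := by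
  constructor
  · rintro (⟨j, hj, hjk⟩ | ⟨j, hj, hjk⟩)
    · have hjk' : 2 * j = 2 * k := hjk
      obtain rfl : j = k := by omega
      exact hj
    · have hjk' : 2 * j + 1 = 2 * k := hjk
      omega
  · intro hk
    exact Or.inl ⟨k, hk, rfl⟩

lemma mem_usum_odd {a t : Set ℕ} {k : ℕ} : 2 * k + 1 ∈ usum a t ↔ k ∈ t := by
  constructor
  · rintro (⟨j, hj, hjk⟩ | ⟨j, hj, hjk⟩)
    · have hjk' : 2 * j = 2 * k + 1 := hjk
      omega
    · have hjk' : 2 * j + 1 = 2 * k + 1 := hjk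
      obtain rfl : j = k := by omega
      exact hj
  · intro hk
    exact Or.inr ⟨k, hk, rfl⟩

lemma usum_injective {a t a' t' : Set ℕ} (h : usum a t = usum a' t') : a = a' ∧ t = t' := by
  constructor
  · ext k
    rw [← mem_usum_even (t := t), h, mem_usum_even]
  · ext k
    rw [← mem_usum_odd (a := a), h, mem_usum_odd]

lemma usum_infinite {a t : Set ℕ} (ha : a.Infinite) : (usum a t).Infinite := by
  have h2 : Function.Injective (fun k => 2 * k : ℕ → ℕ) := fun x y hxy => by have h : 2 * x = 2 * y := hxy; omega
  exact (Set.Infinite.image (h2.injOn) ha).mono Set.subset_union_left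

lemma strictMono_eq_of_range_eq {f g : ℕ → ℕ} (hf : StrictMono f) (hg : StrictMono g)
    (h : Set.range f = Set.range g) : f = g := by
  funext n
  induction n using Nat.strong_induction_on with
  | _ n ih =>
    have h1 : f n ≤ g n := by
      obtain ⟨k, hk⟩ : g n ∈ Set.range f := h ▸ Set.mem_range_self n
      rcases lt_or_ge k n with hkn | hkn
      · rw [ih k hkn] at hk
        exact absurd hk (ne_of_lt (hg hkn))
      · exact hk ▸ hf.monotone hkn
    have h2 : g n ≤ f n := by
      obtain ⟨k, hk⟩ : f n ∈ Set.range g := h.symm ▸ Set.mem_range_self n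
      rcases lt_or_ge k n with hkn | hkn
      · rw [← ih k hkn] at hk
        exact absurd hk (ne_of_lt (hf hkn))
      · exact hk ▸ hg.monotone hkn
    omega

lemma le_enum_usum {G : ℕ → ℕ} (hG : StrictMono G) (u : Set ℕ) (n : ℕ) :
    2 * G n ≤ enum (usum (Set.range G) (G '' u)) (2 * n) := by
  classical
  set x := usum (Set.range G) (G '' u) with hx
  have hxinf : (setOf (· ∈ x)).Infinite := by
    exact usum_infinite (t := G '' u)
      (Set.infinite_range_of_injective hG.injective)
  show 2 * G n ≤ Nat.nth (· ∈ x) (2 * n)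
  refine (Nat.count_le_iff_le_nth hxinf).1 ?_
  rw [Nat.count_eq_card_filter_range]
  have hsub : (Finset.range (2 * G n)).filter (· ∈ x) ⊆
      ((Finset.range n).image fun k => 2 * G k) ∪
      ((Finset.range n).image fun k => 2 * G k + 1) := by
    intro m hm
    simp only [Finset.mem_filter, Finset.mem_range] at hm
    obtain ⟨hmlt, hmx⟩ := hm
    rcases hmx with ⟨j, ⟨k, rfl⟩, rfl⟩ | ⟨j, ⟨k, hku, rfl⟩, rfl⟩
    · have hmlt' : 2 * G k < 2 * G n := hmlt
      have hk : k < n := hG.lt_iff_lt.1 (by omega)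
      exact Finset.mem_union_left _ (Finset.mem_image.2 ⟨k, Finset.mem_range.2 hk, rfl⟩)
    · have hmlt' : 2 * G k + 1 < 2 * G n := hmlt
      have hk : k < n := hG.lt_iff_lt.1 (by omega)
      exact Finset.mem_union_right _ (Finset.mem_image.2 ⟨k, Finset.mem_range.2 hk, rfl⟩)
  calc ((Finset.range (2 * G n)).filter (· ∈ x)).card
      ≤ _ := Finset.card_le_card hsub
    _ ≤ ((Finset.range n).image fun k => 2 * G k).card +
        ((Finset.range n).image fun k => 2 * G k + 1).card := Finset.card_union_le _ _
    _ ≤ 2 * n := by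
        have := Finset.card_image_le (s := Finset.range n) (f := fun k => 2 * G k)
        have := Finset.card_image_le (s := Finset.range n) (f := fun k => 2 * G k + 1)
        simp only [Finset.card_range] at *
        omega

lemma mk_initialSeg_le (o c : Ordinal) :
    #{ i : o.ToType | Ordinal.typein (α := o.ToType) (· < ·) i < c } ≤ c.card := by
  rw [← Cardinal.mk_toType]
  refine Cardinal.mk_le_of_injective
    (f := fun i : { i : o.ToType | Ordinal.typein (α := o.ToType) (· < ·) i < c } =>
      Ordinal.ToType.mk (o := c) ⟨Ordinal.typein (α := o.ToType) (· < ·) i.1, i.2⟩) ?_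
  intro i j hij
  have h1 := (Ordinal.ToType.mk (o := c)).injective hij
  have h2 : Ordinal.typein (α := o.ToType) (· < ·) i.1 =
      Ordinal.typein (α := o.ToType) (· < ·) j.1 := congrArg Subtype.val h1
  exact Subtype.ext (Ordinal.typein_injective _ h2)

end Stmt7Aux

open Stmt7Aux in
theorem stmt7 (h : (Cardinal.ord dNum).cof < dNum) :
    ∃ X : Set (Set ℕ), (∀ x ∈ X, x.Infinite) ∧ #X = (Cardinal.ord dNum).cof ∧
      ∀ Y ⊆ X, (∃ b : Set ℕ, b.Infinite ∧ ∀ y ∈ Y, ∀ n, enum y n ≤ enum b n) →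
        #Y < (Cardinal.ord dNum).cof := by
  classical
  obtain ⟨D₀, hD₀, hcard⟩ := dNum_mem
  have hℵ : ℵ₀ ≤ dNum := aleph0_lt_dNum.le
  have holim : Order.IsSuccLimit (Cardinal.ord dNum) := Cardinal.isSuccLimit_ord hℵ
  have hκinf : ℵ₀ ≤ (Cardinal.ord dNum).cof := Ordinal.aleph0_le_cof.2 holim
  have hμlim : Order.IsSuccLimit ((Cardinal.ord dNum).cof.ord) := Cardinal.isSuccLimit_ord hκinf
  -- index the dominating family by (ord dNum).ToType
  have hmkι : #(Cardinal.ord dNum).ToType = dNum := by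
    rw [Cardinal.mk_toType, Cardinal.card_ord]
  obtain ⟨e⟩ : Nonempty ((Cardinal.ord dNum).ToType ≃ D₀) :=
    Cardinal.eq.1 (by rw [hmkι, hcard])
  set d : (Cardinal.ord dNum).ToType → ℕ → ℕ := fun i => (e i : ℕ → ℕ) with hd
  have hdsurj : ∀ f ∈ D₀, ∃ i, d i = f := fun f hf =>
    ⟨e.symm ⟨f, hf⟩, by simp [hd]⟩
  -- a cofinal scale indexed by the cofinality
  obtain ⟨lam, hlam_lt, hlam_mono, hlam_cof⟩ :
      ∃ lam : ((Cardinal.ord dNum).cof.ord).ToType → Ordinal,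
        (∀ β, lam β < Cardinal.ord dNum) ∧
        (∀ β γ, β < γ → lam β < lam γ) ∧
        (∀ c, c < Cardinal.ord dNum → ∃ β, c ≤ lam β) := by
    obtain ⟨fs, hfs⟩ := Ordinal.exists_fundamental_sequence (Cardinal.ord dNum)
    have htyβ : ∀ β : ((Cardinal.ord dNum).cof.ord).ToType,
        Ordinal.typein (α := ((Cardinal.ord dNum).cof.ord).ToType) (· < ·) β <
          (Cardinal.ord dNum).cof.ord :=
      fun β => Ordinal.typein_lt_self β
    refine ⟨fun β => fs (Ordinal.typein (α := ((Cardinal.ord dNum).cof.ord).ToType) (· < ·) β) (htyβ β), fun β => hfs.lt _, ?_, ?_⟩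
    · intro β γ hβγ
      exact hfs.2.1 (htyβ β) (htyβ γ)
        ((Ordinal.typein_lt_typein (α := ((Cardinal.ord dNum).cof.ord).ToType) (· < ·)).2 hβγ)
    · intro c hc
      rw [← hfs.blsub_eq] at hc
      obtain ⟨p, hp, hple⟩ := Ordinal.lt_blsub_iff.1 hc
      refine ⟨Ordinal.ToType.mk ⟨p, hp⟩, ?_⟩
      refine hple.trans (le_of_eq ?_)
      congr 1
      exact (congrArg Subtype.val
        ((Ordinal.ToType.mk (o := (Cardinal.ord dNum).cof.ord)).symm_apply_apply ⟨p, hp⟩)).symm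
  -- escaping functions
  have hesc : ∀ β : ((Cardinal.ord dNum).cof.ord).ToType, ∃ gg : ℕ → ℕ,
      ∀ i : (Cardinal.ord dNum).ToType,
        Ordinal.typein (α := (Cardinal.ord dNum).ToType) (· < ·) i < lam β →
          ∃ᶠ n in atTop, (Finset.range (2 * n + 1)).sup (d i) < gg n := by
    intro β
    have hEcard : #((fun f : ℕ → ℕ => fun n => (Finset.range (2 * n + 1)).sup f) ''
        (d '' { i | Ordinal.typein (α := (Cardinal.ord dNum).ToType) (· < ·) i < lam β }))
        < dNum := by
      calc _ ≤ #(d '' { i | Ordinal.typein (α := (Cardinal.ord dNum).ToType) (· < ·) i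
            < lam β }) := Cardinal.mk_image_le
        _ ≤ #{ i : (Cardinal.ord dNum).ToType |
            Ordinal.typein (α := (Cardinal.ord dNum).ToType) (· < ·) i < lam β } :=
          Cardinal.mk_image_le
        _ ≤ (lam β).card := mk_initialSeg_le _ _
        _ < dNum := Cardinal.lt_ord.1 (hlam_lt β)
    obtain ⟨gg, hgg⟩ := exists_escape hEcard
    exact ⟨gg, fun i hi => hgg _ ⟨d i, ⟨i, hi, rfl⟩, rfl⟩⟩
  choose g hg using hesc
  -- strictly monotone majorants
  have hGex : ∀ β : ((Cardinal.ord dNum).cof.ord).ToType,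
      ∃ GG : ℕ → ℕ, StrictMono GG ∧ ∀ n, g β n ≤ GG n := by
    intro β
    refine ⟨fun n => (Finset.range (n + 1)).sup (g β) + n, strictMono_nat_of_lt_succ ?_, ?_⟩
    · intro n
      have h1 : (Finset.range (n + 1)).sup (g β) ≤ (Finset.range (n + 1 + 1)).sup (g β) :=
        Finset.sup_mono (Finset.range_subset_range.2 (by omega))
      show (Finset.range (n + 1)).sup (g β) + n < (Finset.range (n + 1 + 1)).sup (g β) + (n + 1)
      omega
    · intro n
      have h1 : g β n ≤ (Finset.range (n + 1)).sup (g β) :=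
        Finset.le_sup (Finset.self_mem_range_succ n)
      show g β n ≤ (Finset.range (n + 1)).sup (g β) + n
      omega
  choose G hGmono hGge using hGex
  -- tags
  have hκc : (Cardinal.ord dNum).cof ≤ #(Set ℕ) := by
    have h1 : dNum ≤ #(ℕ → ℕ) := le_of_le_of_eq (dNum_le isDominating_univ) Cardinal.mk_univ
    have h2 : #(ℕ → ℕ) = #(Set ℕ) := by
      rw [← Cardinal.power_def ℕ ℕ, Cardinal.mk_set, Cardinal.mk_nat,
        Cardinal.aleph0_power_aleph0, Cardinal.two_power_aleph0]
    exact h.le.trans (h1.trans h2.le)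
  obtain ⟨u⟩ : Nonempty (((Cardinal.ord dNum).cof.ord).ToType ↪ Set ℕ) := by
    rw [← Cardinal.le_def, Cardinal.mk_toType, Cardinal.card_ord]
    exact hκc
  set x : ((Cardinal.ord dNum).cof.ord).ToType → Set ℕ :=
    fun β => usum (Set.range (G β)) (G β '' (u β)) with hx
  have hxinj : Function.Injective x := by
    intro β γ hbg
    simp only [hx] at hbg
    obtain ⟨h1, h2⟩ := usum_injective hbg
    have hGeq : G β = G γ := strictMono_eq_of_range_eq (hGmono β) (hGmono γ) h1
    rw [hGeq] at h2
    exact u.injective ((Set.image_injective.2 (hGmono γ).injective) h2)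
  refine ⟨Set.range x, ?_, ?_, ?_⟩
  · rintro _ ⟨β, rfl⟩
    exact usum_infinite (Set.infinite_range_of_injective (hGmono β).injective)
  · rw [Cardinal.mk_range_eq _ hxinj, Cardinal.mk_toType, Cardinal.card_ord]
  · rintro Y hYX ⟨b, hbinf, hbd⟩
    by_contra hY
    push_neg at hY
    set T : Set ((Cardinal.ord dNum).cof.ord).ToType := x ⁻¹' Y with hT
    have hYT : Y = x '' T := (Set.image_preimage_eq_of_subset hYX).symm
    have hκT : (Cardinal.ord dNum).cof ≤ #T :=
      hY.trans (by rw [hYT]; exact Cardinal.mk_image_le)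
    have hTub : ∀ j, ∃ t ∈ T, j < t := by
      intro j
      by_contra hc
      push_neg at hc
      have hsub : T ⊆ { i : ((Cardinal.ord dNum).cof.ord).ToType |
          Ordinal.typein (α := ((Cardinal.ord dNum).cof.ord).ToType) (· < ·) i <
            Ordinal.typein (α := ((Cardinal.ord dNum).cof.ord).ToType) (· < ·) j + 1 } := by
        intro t ht
        have h2 : Ordinal.typein (α := ((Cardinal.ord dNum).cof.ord).ToType) (· < ·) t ≤
            Ordinal.typein (α := ((Cardinal.ord dNum).cof.ord).ToType) (· < ·) j :=
          (Ordinal.typein_le_typein' _).2 (hc t ht)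
        have h3 := Order.lt_succ (Ordinal.typein
          (α := ((Cardinal.ord dNum).cof.ord).ToType) (· < ·) j)
        rw [Set.mem_setOf_eq, Ordinal.add_one_eq_succ]
        exact h2.trans_lt h3
      have hlt : Ordinal.typein (α := ((Cardinal.ord dNum).cof.ord).ToType) (· < ·) j + 1 <
          (Cardinal.ord dNum).cof.ord := by
        rw [Ordinal.add_one_eq_succ]
        exact hμlim.succ_lt (Ordinal.typein_lt_self j)
      have hmk : #T ≤ (Ordinal.typein
          (α := ((Cardinal.ord dNum).cof.ord).ToType) (· < ·) j + 1).card :=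
        (Cardinal.mk_le_mk_of_subset hsub).trans (mk_initialSeg_le _ _)
      exact absurd (hκT.trans hmk) (not_le.2 (Cardinal.lt_ord.1 hlt))
    obtain ⟨dd, hddD, hev⟩ := hD₀ (enum b)
    obtain ⟨i, rfl⟩ := hdsurj dd hddD
    obtain ⟨β₀, hβ₀⟩ := hlam_cof (Ordinal.typein (α := (Cardinal.ord dNum).ToType) (· < ·) i)
      (Ordinal.typein_lt_self i)
    obtain ⟨t, htT, hjt⟩ := hTub β₀
    have hia : Ordinal.typein (α := (Cardinal.ord dNum).ToType) (· < ·) i < lam t :=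
      hβ₀.trans_lt (hlam_mono _ _ hjt)
    have hfreq := hg t i hia
    have hev2 : ∀ᶠ n in atTop, enum b (2 * n) ≤ d i (2 * n) := by
      obtain ⟨N, hN⟩ := Filter.eventually_atTop.1 hev
      exact Filter.eventually_atTop.2 ⟨N, fun n hn => hN _ (by omega)⟩
    obtain ⟨n, hn1, hn2⟩ := (hfreq.and_eventually hev2).exists
    have hxtY : x t ∈ Y := htT
    have c1 : g t n ≤ G t n := hGge t n
    have c2 : 2 * G t n ≤ enum (x t) (2 * n) := le_enum_usum (hGmono t) (u t) n
    have c3 : enum (x t) (2 * n) ≤ enum b (2 * n) := hbd _ hxtY _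
    have c4 : d i (2 * n) ≤ (Finset.range (2 * n + 1)).sup (d i) :=
      Finset.le_sup (Finset.mem_range.2 (by omega))
    omega
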